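/- arXiv:2103.15817 — 2 statements merged into one kernel-verified Lean document; each statement's English description precedes it below -/
import Mathlib

section
/- Fix n ≥ 3, 2 ≤ p < n and q = np/(n−p) − 1. For positive parameters a, b and a center y ∈ ℝⁿ, the Talenti function Y_{a,b,y}(x) = (a + b |x − y|^{p/(p−1)})^{−(n−p)/p} satisfies −Δ_p Y_{a,b,y} = n ((n−p)/(p−1))^{p−1} a b^{p−1} (Y_{a,b,y})^q on ℝⁿ ∖ {y}, where Δ_p u = div(|∇u|^{p−2} ∇u). -/
open Real Filter

private lemma sq_rpow' {s : ℝ} (hs : 0 ≤ s) (e : ℝ) : ((s ^ 2 : ℝ)) ^ e = s ^ (2 * e) := by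
  rw [← Real.rpow_natCast s 2, ← Real.rpow_mul hs]
  norm_num

private lemma talenti_scalar1 (K A s p m k : ℝ) (hK : 0 < K) (hA : 0 < A) (hs : 0 < s)
    (hmp : m * (p - 1) = p) :
    (K * A ^ (-k - 1) * s ^ (m - 2) * s) ^ (p - 2) * (K * A ^ (-k - 1) * s ^ (m - 2))
      = K ^ (p - 1) * A ^ (-((k + 1) * (p - 1))) := by
  rw [show K = Real.exp (Real.log K) from (Real.exp_log hK).symm,
      show A = Real.exp (Real.log A) from (Real.exp_log hA).symm,
      show s = Real.exp (Real.log s) from (Real.exp_log hs).symm]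
  simp only [← Real.exp_mul, ← Real.exp_add]
  rw [Real.exp_eq_exp]
  linear_combination Real.log s * hmp

private lemma talenti_scalar2 (nr β mv C a b z P X u e d1 d2 : ℝ)
    (h1 : u * e = z) (h2 : P * (a + b * z) = X) (h3 : β * mv = nr) (hC : d1 * d2 = C) :
    -(nr * -(C * X) + 2 * (C * β * P * (b * (mv/2) * u)) * e) = nr * d1 * a * d2 * P := by
  linear_combination (-(nr*C))*h2 + (-(C*β*b*mv*P))*h1 + (-(C*P*b*z))*h3 + (-(nr*a*P))*hC

/-- The `p`-Laplacian `Δ_p u = div(|∇u|^{p-2} ∇u)`, computed classically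
coordinatewise via Fréchet derivatives. -/
noncomputable def pLap {n : ℕ} (p : ℝ) (u : EuclideanSpace ℝ (Fin n) → ℝ)
    (x : EuclideanSpace ℝ (Fin n)) : ℝ :=
  ∑ i : Fin n,
    fderiv ℝ (fun z => ‖gradient u z‖ ^ (p - 2) * fderiv ℝ u z (EuclideanSpace.single i 1)) x
      (EuclideanSpace.single i 1)

set_option maxHeartbeats 1000000 in
/-- The Talenti function `Y_{a,b,y}(x) = (a + b|x-y|^{p/(p-1)})^{-(n-p)/p}` satisfies
`-Δ_p Y = n((n-p)/(p-1))^{p-1} a b^{p-1} Y^q` away from the center `y`. -/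
theorem talenti_equation (n : ℕ) (hn : 3 ≤ n) (p q a b : ℝ)
    (hp : 2 ≤ p) (hpn : p < n) (hq : q = n * p / (n - p) - 1)
    (ha : 0 < a) (hb : 0 < b)
    (y : EuclideanSpace ℝ (Fin n)) (Y : EuclideanSpace ℝ (Fin n) → ℝ)
    (hY : ∀ x, Y x = (a + b * ‖x - y‖ ^ (p / (p - 1))) ^ (-((n - p) / p))) :
    ∀ x, x ≠ y →
      -pLap p Y x = n * ((n - p) / (p - 1)) ^ (p - 1) * a * b ^ (p - 1) * Y x ^ q := by
  have hnR : (3:ℝ) ≤ (n:ℝ) := by exact_mod_cast hn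
  have hp0 : (0:ℝ) < p := by linarith
  have hp1 : (0:ℝ) < p - 1 := by linarith
  have hnp : (0:ℝ) < (n:ℝ) - p := by linarith
  set k : ℝ := ((n:ℝ) - p) / p with hkdef
  set m : ℝ := p / (p - 1) with hmdef
  have hk0 : 0 < k := div_pos hnp hp0
  have hm0 : 0 < m := div_pos hp0 hp1
  have hmp : m * (p - 1) = p := by rw [hmdef]; field_simp
  set C : ℝ := (k * b * m) ^ (p - 1) with hCdef
  set β : ℝ := (k + 1) * (p - 1) with hβdef
  have hkbm0 : 0 < k * b * m := by positivity
  have hC0 : 0 < C := rpow_pos_of_pos hkbm0 _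
  set N : EuclideanSpace ℝ (Fin n) → ℝ := fun z => ‖z - y‖ ^ 2 with hNdef
  set F : ℝ → ℝ := fun t => (a + b * t ^ (m/2)) ^ (-k) with hFdef
  set F' : ℝ → ℝ := fun t =>
    b * (m/2 * t ^ (m/2 - 1)) * (-k) * (a + b * t ^ (m/2)) ^ (-k - 1) with hF'def
  set G : ℝ → ℝ := fun t => -(C * (a + b * t ^ (m/2)) ^ (-β)) with hGdef
  set G' : ℝ → ℝ := fun t =>
    -(C * (b * (m/2 * t ^ (m/2 - 1)) * (-β) * (a + b * t ^ (m/2)) ^ (-β - 1))) with hG'def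
  have hA0 : ∀ t : ℝ, 0 ≤ t → 0 < a + b * t ^ (m/2) := fun t ht =>
    add_pos_of_pos_of_nonneg ha (mul_nonneg hb.le (Real.rpow_nonneg ht _))
  have hApos : ∀ z : EuclideanSpace ℝ (Fin n), 0 < a + b * ‖z - y‖ ^ m := fun z =>
    add_pos_of_pos_of_nonneg ha (mul_nonneg hb.le (Real.rpow_nonneg (norm_nonneg _) _))
  have hFd : ∀ t : ℝ, 0 < t → HasDerivAt F (F' t) t := by
    intro t ht
    exact (((Real.hasDerivAt_rpow_const (p := m/2) (Or.inl ht.ne')).const_mul b).const_add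
      a).rpow_const (Or.inl (hA0 t ht.le).ne')
  have hGd : ∀ t : ℝ, 0 < t → HasDerivAt G (G' t) t := by
    intro t ht
    exact ((((Real.hasDerivAt_rpow_const (p := m/2) (Or.inl ht.ne')).const_mul b).const_add
      a).rpow_const (Or.inl (hA0 t ht.le).ne')).const_mul C |>.neg
  have hDN : ∀ z : EuclideanSpace ℝ (Fin n), HasFDerivAt N (2 • (innerSL ℝ (z - y))) z := by
    intro z
    have h := ((hasFDerivAt_id z).sub_const y).norm_sq
    rwa [ContinuousLinearMap.comp_id] at h
  have hNpos : ∀ z : EuclideanSpace ℝ (Fin n), z ≠ y → 0 < N z := by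
    intro z hz
    have hv : (0:ℝ) < ‖z - y‖ := norm_pos_iff.mpr (sub_ne_zero.mpr hz)
    exact pow_pos hv 2
  have hYF : Y = fun z => F (N z) := by
    funext z
    rw [hY z]
    show _ = (a + b * ((‖z - y‖ : ℝ) ^ 2) ^ (m/2)) ^ (-k)
    rw [sq_rpow' (norm_nonneg _), show 2 * (m/2) = m by ring]
  have hYd : ∀ z, z ≠ y → HasFDerivAt Y ((F' (N z)) • (2 • (innerSL ℝ (z - y)))) z := by
    intro z hz
    have h := (hFd (N z) (hNpos z hz)).comp_hasFDerivAt z (hDN z)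
    rw [hYF]; exact h
  have hYg : ∀ z, z ≠ y → HasGradientAt Y ((2 * F' (N z)) • (z - y)) z := by
    intro z hz
    rw [hasGradientAt_iff_hasFDerivAt]
    refine (hYd z hz).congr_fderiv ?_
    refine ContinuousLinearMap.ext fun u => ?_
    simp [InnerProductSpace.toDual_apply_apply, real_inner_smul_left, two_smul]
    ring
  have hgradval : ∀ z, z ≠ y → gradient Y z = (2 * F' (N z)) • (z - y) :=
    fun z hz => (hYg z hz).gradient
  have hfval : ∀ z, z ≠ y → ∀ i : Fin n,
      fderiv ℝ Y z (EuclideanSpace.single i 1) = 2 * F' (N z) * ((z - y) i) := by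
    intro z hz i
    rw [(hYd z hz).fderiv]
    simp [EuclideanSpace.inner_single_right, two_smul]
    ring
  have h2F' : ∀ z : EuclideanSpace ℝ (Fin n), 2 * F' (N z)
      = -(k * b * m * (a + b * ‖z - y‖ ^ m) ^ (-k - 1) * ‖z - y‖ ^ (m - 2)) := by
    intro z
    show 2 * (b * (m/2 * ((‖z - y‖ : ℝ) ^ 2) ^ (m/2 - 1)) * (-k)
        * (a + b * ((‖z - y‖ : ℝ) ^ 2) ^ (m/2)) ^ (-k - 1)) = _
    rw [sq_rpow' (norm_nonneg _), sq_rpow' (norm_nonneg _),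
      show 2 * (m/2) = m by ring, show 2 * (m/2 - 1) = m - 2 by ring]
    ring
  have hGval : ∀ z : EuclideanSpace ℝ (Fin n),
      G (N z) = -(C * (a + b * ‖z - y‖ ^ m) ^ (-β)) := by
    intro z
    show -(C * (a + b * ((‖z - y‖ : ℝ) ^ 2) ^ (m/2)) ^ (-β)) = _
    rw [sq_rpow' (norm_nonneg _), show 2 * (m/2) = m by ring]
  have hG'val : ∀ z : EuclideanSpace ℝ (Fin n),
      G' (N z) = C * β * (a + b * ‖z - y‖ ^ m) ^ (-β - 1) * (b * (m/2) * ‖z - y‖ ^ (m - 2)) := by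
    intro z
    show -(C * (b * (m/2 * ((‖z - y‖ : ℝ) ^ 2) ^ (m/2 - 1)) * (-β)
        * (a + b * ((‖z - y‖ : ℝ) ^ 2) ^ (m/2)) ^ (-β - 1))) = _
    rw [sq_rpow' (norm_nonneg _), sq_rpow' (norm_nonneg _),
      show 2 * (m/2) = m by ring, show 2 * (m/2 - 1) = m - 2 by ring]
    ring
  have hflux : ∀ z, z ≠ y → ∀ i : Fin n,
      ‖gradient Y z‖ ^ (p - 2) * fderiv ℝ Y z (EuclideanSpace.single i 1)
        = G (N z) * ((z - y) i) := by
    intro z hz i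
    have hs : (0:ℝ) < ‖z - y‖ := norm_pos_iff.mpr (sub_ne_zero.mpr hz)
    rw [hgradval z hz, hfval z hz i, h2F' z, hGval z, norm_smul, Real.norm_eq_abs, abs_neg,
      abs_of_nonneg (by positivity)]
    have key := talenti_scalar1 (k * b * m) (a + b * ‖z - y‖ ^ m) (‖z - y‖) p m k hkbm0
      (hApos z) hs hmp
    rw [hCdef, hβdef]
    linear_combination (-((z - y) i)) * key
  intro x hx
  have hsx : (0:ℝ) < ‖x - y‖ := norm_pos_iff.mpr (sub_ne_zero.mpr hx)
  have htx : 0 < N x := hNpos x hx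
  have hpsi : ∀ i : Fin n,
      fderiv ℝ (fun z => G (N z) * ((z - y) i)) x (EuclideanSpace.single i 1)
        = G (N x) + 2 * G' (N x) * ((x - y) i) ^ 2 := by
    intro i
    have hc : HasFDerivAt (fun z => G (N z)) ((G' (N x)) • (2 • (innerSL ℝ (x - y)))) x :=
      (hGd (N x) htx).comp_hasFDerivAt x (hDN x)
    have hd : HasFDerivAt (fun z : EuclideanSpace ℝ (Fin n) => (z - y) i)
        (PiLp.proj (𝕜 := ℝ) 2 (fun _ : Fin n => ℝ) i) x := by
      have h := (((PiLp.proj (𝕜 := ℝ) 2 (fun _ : Fin n => ℝ) i).hasFDerivAt (x := x))).sub_const (y i)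
      simpa only [PiLp.proj_apply, PiLp.sub_apply] using h
    rw [show fderiv ℝ (fun z : EuclideanSpace ℝ (Fin n) => G (N z) * ((z - y) i)) x
        = (G (N x)) • (PiLp.proj (𝕜 := ℝ) 2 (fun _ : Fin n => ℝ) i)
          + ((x - y) i) • ((G' (N x)) • (2 • (innerSL ℝ (x - y)))) from (hc.mul hd).fderiv]
    simp [EuclideanSpace.inner_single_right, EuclideanSpace.single_apply, two_smul]
    ring
  have hsum : ∑ i : Fin n, ((x - y) i) ^ 2 = ‖x - y‖ ^ 2 := by
    rw [EuclideanSpace.norm_eq, Real.sq_sqrt (by positivity)]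
    simp [Real.norm_eq_abs, sq_abs]
  have hplap : pLap p Y x = (n : ℝ) * G (N x) + 2 * G' (N x) * ‖x - y‖ ^ 2 := by
    have hstep : pLap p Y x = ∑ i : Fin n, (G (N x) + 2 * G' (N x) * ((x - y) i) ^ 2) := by
      simp only [pLap]
      refine Finset.sum_congr rfl fun i _ => ?_
      rw [← hpsi i]
      congr 1
      apply Filter.EventuallyEq.fderiv_eq
      filter_upwards [IsOpen.mem_nhds isOpen_compl_singleton hx] with z hz
      exact hflux z hz i
    rw [hstep, Finset.sum_add_distrib, Finset.sum_const, Finset.card_univ, Fintype.card_fin,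
      ← Finset.mul_sum, hsum, nsmul_eq_mul]
  rw [hplap, hGval x, hG'val x, hY x]
  have hA' : 0 < a + b * ‖x - y‖ ^ m := hApos x
  have h1 : ‖x - y‖ ^ (m - 2) * ((‖x - y‖ : ℝ) ^ 2) = ‖x - y‖ ^ m := by
    rw [← Real.rpow_natCast (‖x - y‖) 2, ← Real.rpow_add hsx]
    congr 1
    push_cast; ring
  have h2 : (a + b * ‖x - y‖ ^ m) ^ (-β - 1) * (a + b * ‖x - y‖ ^ m)
      = (a + b * ‖x - y‖ ^ m) ^ (-β) := by
    nth_rewrite 2 [← Real.rpow_one (a + b * ‖x - y‖ ^ m)]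
    rw [← Real.rpow_add hA']
    congr 1 <;> ring
  have hkp : k * p = (n:ℝ) - p := by rw [hkdef]; exact div_mul_cancel₀ _ hp0.ne'
  have h3 : β * m = (n : ℝ) := by
    rw [hβdef]
    linear_combination (k + 1) * hmp + hkp
  have hkq : ((a + b * ‖x - y‖ ^ m) ^ (-k)) ^ q = (a + b * ‖x - y‖ ^ m) ^ (-β - 1) := by
    rw [← Real.rpow_mul hA'.le]
    congr 1
    have hkq1 : k * ((n:ℝ) * p / ((n:ℝ) - p)) = (n:ℝ) := by
      rw [hkdef, div_mul_div_comm, div_eq_iff (mul_ne_zero hp0.ne' hnp.ne')]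
      ring
    rw [hq, hβdef]
    linear_combination -hkq1 + hkp
  have hC' : (((n:ℝ) - p) / (p - 1)) ^ (p - 1) * b ^ (p - 1) = C := by
    rw [← Real.mul_rpow (div_nonneg hnp.le hp1.le) hb.le, hCdef]
    congr 1
    rw [hkdef, hmdef]
    field_simp [hp0.ne', hp1.ne', hnp.ne']
    try ring
  rw [hkq]
  exact talenti_scalar2 _ _ _ _ _ _ _ _ _ _ _ _ _ h1 h2 h3 hC'
end

section
/- Let n ≥ 3, 2 ≤ p < n, q = np/(n−p) − 1. Suppose v: Ω × [0, S*] → [0,∞) and γ: [0,T] → (0,∞), s: [0,T] → [0,S*] are C¹ with s'(t) = γ(t)^{(q+1)p/n} and γ'(t) = −(1/q) γ(t) ∫_Ω |∇u(x,t)|^p dx where u(x,t) := v(x, s(t))/γ(t). If v satisfies ∂_s(v^q) = Δ_p v classically, then u satisfies ∂_t(u^q) − Δ_p u = (∫_Ω |∇u(x,t)|^p dx) u^q classically. -/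
open MeasureTheory Topology Filter

lemma fderiv_const_mul'' {E : Type*} [NormedAddCommGroup E] [NormedSpace ℝ E]
    {c : ℝ} (hc : c ≠ 0) (w : E → ℝ) (z : E) :
    fderiv ℝ (fun y => c * w y) z = c • fderiv ℝ w z := by
  by_cases h : DifferentiableAt ℝ w z
  · exact fderiv_const_mul h c
  · rw [fderiv_zero_of_not_differentiableAt h,
      fderiv_zero_of_not_differentiableAt, smul_zero]
    intro h'
    exact h (by simpa [inv_mul_cancel_left₀ hc] using h'.const_mul c⁻¹)

lemma gradient_const_mul'' {E : Type*} [NormedAddCommGroup E] [InnerProductSpace ℝ E]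
    [CompleteSpace E] {c : ℝ} (hc : c ≠ 0) (w : E → ℝ) (z : E) :
    gradient (fun y => c * w y) z = c • gradient w z := by
  unfold gradient
  rw [fderiv_const_mul'' hc, _root_.map_smul]

lemma pLap_const_mul {n : ℕ} {p c : ℝ} (hc : 0 < c)
    (w : EuclideanSpace ℝ (Fin n) → ℝ) (x : EuclideanSpace ℝ (Fin n)) :
    pLap p (fun z => c * w z) x = c ^ (p - 1) * pLap p w x := by
  unfold pLap
  rw [Finset.mul_sum]
  apply Finset.sum_congr rfl
  intro i _
  have hcp : c ^ (p - 2) * c = c ^ (p - 1) := by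
    rw [show p - 1 = (p - 2) + 1 by ring, Real.rpow_add hc, Real.rpow_one]
  have key : (fun z => ‖gradient (fun y => c * w y) z‖ ^ (p - 2) *
      fderiv ℝ (fun y => c * w y) z (EuclideanSpace.single i 1))
      = fun z => c ^ (p - 1) *
        (‖gradient w z‖ ^ (p - 2) * fderiv ℝ w z (EuclideanSpace.single i 1)) := by
    funext z
    rw [gradient_const_mul'' hc.ne' w z, fderiv_const_mul'' hc.ne' w z]
    rw [norm_smul, Real.norm_eq_abs, abs_of_pos hc,
      Real.mul_rpow hc.le (norm_nonneg _), ContinuousLinearMap.smul_apply]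
    rw [smul_eq_mul]
    linear_combination (‖gradient w z‖ ^ (p - 2) *
      (fderiv ℝ w z (EuclideanSpace.single i 1))) * hcp
  rw [key, fderiv_const_mul'' (ne_of_gt (Real.rpow_pos_of_pos hc (p - 1)))]
  simp


/-- Nonlinear intrinsic scaling: if `v` solves `∂_s(v^q) = Δ_p v` classically,
`s'(t) = γ(t)^{(q+1)p/n}` and `γ'(t) = -(1/q) γ(t) ∫_Ω |∇u(t)|^p`, then
`u(x,t) = v(x,s(t))/γ(t)` solves `∂_t(u^q) - Δ_p u = (∫_Ω |∇u(t)|^p) u^q`. -/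
theorem intrinsic_scaling_transforms (n : ℕ) (hn : 3 ≤ n) (p q T : ℝ)
    (hp : 2 ≤ p) (hpn : p < n) (hq : q = n * p / (n - p) - 1) (hT : 0 < T)
    (Ω : Set (EuclideanSpace ℝ (Fin n)))
    (v u : EuclideanSpace ℝ (Fin n) → ℝ → ℝ) (γ s : ℝ → ℝ)
    (hvnn : ∀ x σ, 0 ≤ v x σ)
    (hγpos : ∀ t ∈ Set.Icc 0 T, 0 < γ t)
    (hu : ∀ x t, u x t = v x (s t) / γ t)
    (hs' : ∀ t ∈ Set.Icc 0 T, HasDerivAt s (γ t ^ ((q + 1) * p / n)) t)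
    (hγ' : ∀ t ∈ Set.Icc 0 T,
      HasDerivAt γ (-(1 / q) * γ t * ∫ x in Ω, ‖gradient (fun z => u z t) x‖ ^ p) t)
    (hv : ∀ x σ, HasDerivAt (fun σ => v x σ ^ q) (pLap p (fun z => v z σ) x) σ) :
    ∀ x, ∀ t ∈ Set.Icc 0 T,
      HasDerivAt (fun τ => u x τ ^ q)
        (pLap p (fun z => u z t) x +
          (∫ x in Ω, ‖gradient (fun z => u z t) x‖ ^ p) * u x t ^ q) t := by
  intro x t ht
  have hnR : (3:ℝ) ≤ (n:ℝ) := by exact_mod_cast hn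
  have hnp : (0:ℝ) < (n:ℝ) - p := by linarith
  have hq1 : 1 ≤ q := by
    have h2 : (2:ℝ) ≤ (n:ℝ) * p / ((n:ℝ) - p) := by
      rw [le_div_iff₀ hnp]; nlinarith
    rw [hq]; linarith
  have hqne : q ≠ 0 := by linarith
  have hc : 0 < γ t := hγpos t ht
  set c := γ t with hcdef
  set G := ∫ x in Ω, ‖gradient (fun z => u z t) x‖ ^ p with hGdef
  set Q := pLap p (fun z => u z t) x with hQdef
  set m := u x t with hmdef
  have hm : 0 ≤ m := by rw [hmdef, hu]; exact div_nonneg (hvnn _ _) hc.le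
  have hvm : v x (s t) = c * m := by
    rw [hmdef, hu]; field_simp
    exact (mul_div_cancel_right₀ _ hc.ne').symm
  have he : p - 1 + (q + 1) * p / (n : ℝ) = q := by
    have hn0 : (n:ℝ) ≠ 0 := by linarith
    rw [hq]; field_simp; ring
  -- derivative of A τ = v x (s τ) ^ q
  have hA : HasDerivAt (fun τ => v x (s τ) ^ q)
      (pLap p (fun z => v z (s t)) x * c ^ ((q + 1) * p / n)) t :=
    (hv x (s t)).comp t (hs' t ht)
  -- pLap scaling
  have hP : pLap p (fun z => v z (s t)) x = c ^ (p - 1) * Q := by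
    have : (fun z => v z (s t)) = fun z => c * u z t := by
      funext z; rw [hu]; field_simp
      exact (mul_div_cancel_right₀ _ hc.ne').symm
    rw [this, pLap_const_mul hc]
  -- derivative of B τ = γ τ ^ q
  have hB : HasDerivAt (fun τ => γ τ ^ q)
      ((-(1 / q) * c * G) * q * c ^ (q - 1)) t :=
    (hγ' t ht).rpow_const (Or.inl hc.ne')
  have haq : (0:ℝ) < c ^ q := Real.rpow_pos_of_pos hc q
  have hDiv := hA.div hB haq.ne'
  -- the function agrees with u^q near t
  have hEq : (fun τ => u x τ ^ q) =ᶠ[𝓝 t] fun τ => v x (s τ) ^ q / γ τ ^ q := by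
    have hcont : ContinuousAt γ t := (hγ' t ht).continuousAt
    have hpos : ∀ᶠ τ in 𝓝 t, 0 < γ τ := hcont (Ioi_mem_nhds hc)
    filter_upwards [hpos] with τ hτ
    rw [hu, Real.div_rpow (hvnn _ _) hτ.le]
  have final := hDiv.congr_of_eventuallyEq hEq
  refine final.congr_deriv ?_
  symm
  rw [hP, hvm, Real.mul_rpow hc.le hm]
  have h1 : c ^ (p - 1) * c ^ ((q + 1) * p / n) = c ^ q := by
    rw [← Real.rpow_add hc, he]
  have h2 : c * c ^ (q - 1) = c ^ q := by
    nth_rewrite 1 [← Real.rpow_one c]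
    rw [← Real.rpow_add hc]
    ring_nf
  have hk : -(1 / q) * q = -1 := by field_simp
  rw [eq_div_iff (by positivity)]
  linear_combination (-(Q * c ^ q)) * h1 + (-((1 / q) * q * G * m ^ q * c ^ q)) * h2 +
    (G * m ^ q * c ^ q * c ^ q) * hk
end
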